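/- Let M be a finite module over a commutative ring B and N ⊆ M a direct summand. If N ⊆ M are both direct summands of a finite free B-module of the same constant rank, then N = M. (Inclusion of direct summands of equal rank is an equality.) -/

import Mathlib

open TensorProduct Module

set_option maxHeartbeats 1000000
set_option synthInstance.maxHeartbeats 400000

/-- Let `N ⊆ M` be submodules of `B^n` which are both direct summands, locally
free of the same constant rank `r` (i.e. all fibers at primes of `B` have
dimension `r`).  Then `N = M`. -/
theorem stmt_15 {B : Type*} [CommRing B] (n r : ℕ)
    (N M : Submodule B (Fin n → B)) (hNM : N ≤ M)
    (hN : ∃ N', IsCompl N N') (hM : ∃ M', IsCompl M M')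
    (hrN : ∀ (p : Ideal B) (_ : p.IsPrime),
      finrank (IsLocalRing.ResidueField (Localization.AtPrime p))
        (IsLocalRing.ResidueField (Localization.AtPrime p) ⊗[B] N) = r)
    (hrM : ∀ (p : Ideal B) (_ : p.IsPrime),
      finrank (IsLocalRing.ResidueField (Localization.AtPrime p))
        (IsLocalRing.ResidueField (Localization.AtPrime p) ⊗[B] M) = r) :
    N = M := by
  obtain ⟨N', hN'⟩ := hN
  obtain ⟨M', hM'⟩ := hM
  haveI hfinN : Module.Finite B N :=
    Module.Finite.of_surjective (N.linearProjOfIsCompl N' hN')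
      (fun x ↦ ⟨x, Submodule.linearProjOfIsCompl_apply_left hN' x⟩)
  haveI hfinM : Module.Finite B M :=
    Module.Finite.of_surjective (M.linearProjOfIsCompl M' hM')
      (fun x ↦ ⟨x, Submodule.linearProjOfIsCompl_apply_left hM' x⟩)
  set ι : N →ₗ[B] M := Submodule.inclusion hNM with hι_def
  -- a retraction of the inclusion
  let ρ : M →ₗ[B] N := (N.linearProjOfIsCompl N' hN') ∘ₗ M.subtype
  have hρ : ρ ∘ₗ ι = LinearMap.id := by
    refine LinearMap.ext fun x ↦ ?_
    exact Submodule.linearProjOfIsCompl_apply_left hN' x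
  -- surjectivity of the inclusion after tensoring with each residue field
  have key : ∀ (p : Ideal B) (hp : p.IsPrime),
      Function.Surjective
        (ι.baseChange (IsLocalRing.ResidueField (Localization.AtPrime p))) := by
    intro p hp
    set κ := IsLocalRing.ResidueField (Localization.AtPrime p) with hκ
    have hinj : Function.Injective (ι.baseChange κ) := by
      have hcomp : (ρ.baseChange κ) ∘ₗ (ι.baseChange κ) = LinearMap.id := by
        rw [← LinearMap.baseChange_comp, hρ, LinearMap.baseChange_id]
      exact Function.LeftInverse.injective (g := ρ.baseChange κ) fun x ↦ by
        rw [← LinearMap.comp_apply, hcomp, LinearMap.id_apply]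
    haveI : Module.Finite κ (κ ⊗[B] (M : Submodule B (Fin n → B))) :=
      Module.Finite.base_change B κ _
    haveI : Module.Finite κ (κ ⊗[B] (N : Submodule B (Fin n → B))) :=
      Module.Finite.base_change B κ _
    exact (LinearMap.injective_iff_surjective_of_finrank_eq_finrank
      ((hrN p hp).trans (hrM p hp).symm)).mp hinj
  -- the cokernel of the inclusion
  set Q := M ⧸ LinearMap.range ι with hQ_def
  have hQsub : Subsingleton Q := by
    apply Module.subsingleton_of_localization_maximal
      (fun (P : Ideal B) [P.IsMaximal] ↦ LocalizedModule P.primeCompl Q)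
      (fun (P : Ideal B) [P.IsMaximal] ↦ LocalizedModule.mkLinearMap P.primeCompl Q)
    intro P hP
    have hp : P.IsPrime := hP.isPrime
    haveI : Module.Finite (Localization.AtPrime P) (LocalizedModule P.primeCompl Q) :=
      Module.Finite.of_isLocalizedModule P.primeCompl
        (LocalizedModule.mkLinearMap P.primeCompl Q)
    rw [← IsLocalRing.subsingleton_tensorProduct (R := Localization.AtPrime P)]
    set κ := IsLocalRing.ResidueField (Localization.AtPrime P) with hκ
    have e1 : (Localization.AtPrime P ⊗[B] Q) ≃ₗ[Localization.AtPrime P]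
        LocalizedModule P.primeCompl Q :=
      (IsLocalizedModule.isBaseChange P.primeCompl (Localization.AtPrime P)
        (LocalizedModule.mkLinearMap P.primeCompl Q)).equiv
    have e2 : (κ ⊗[Localization.AtPrime P] (LocalizedModule P.primeCompl Q)) ≃ₗ[κ]
        κ ⊗[B] Q :=
      (LinearEquiv.baseChange (Localization.AtPrime P) κ _ _ e1.symm).trans
        (TensorProduct.AlgebraTensorModule.cancelBaseChange B (Localization.AtPrime P) κ κ Q)
    rw [Equiv.subsingleton_congr e2.toEquiv]
    -- it suffices that every element of `κ ⊗ Q` is zero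
    have hmkQ : Function.Surjective ((LinearMap.range ι).mkQ.baseChange κ) :=
      LinearMap.lTensor_surjective κ (LinearMap.range ι).mkQ_surjective
    have hzero : ((LinearMap.range ι).mkQ.baseChange κ) ∘ₗ (ι.baseChange κ) = 0 := by
      rw [← LinearMap.baseChange_comp]
      have h0 : (LinearMap.range ι).mkQ ∘ₗ ι = 0 :=
        LinearMap.ext fun x ↦ (Submodule.Quotient.mk_eq_zero _).mpr (LinearMap.mem_range_self ι x)
      rw [h0, LinearMap.baseChange_zero]
    refine subsingleton_iff_forall_eq 0 |>.mpr fun x ↦ ?_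
    obtain ⟨y, rfl⟩ := hmkQ x
    obtain ⟨z, rfl⟩ := key P hp y
    rw [← LinearMap.comp_apply, hzero]
    rfl
  have hrange : LinearMap.range ι = ⊤ :=
    Submodule.Quotient.subsingleton_iff.mp hQsub
  refine le_antisymm hNM fun m hm ↦ ?_
  have hmem : (⟨m, hm⟩ : M) ∈ LinearMap.range ι := by rw [hrange]; trivial
  obtain ⟨x, hx⟩ := hmem
  have h1 : ((ι x : M) : Fin n → B) = m := congrArg Subtype.val hx
  rw [← h1, hι_def, Submodule.coe_inclusion]
  exact x.2
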